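/- μ^{(K)} = q^{(K)} ∘ τ^{(K)} as ring homomorphisms F → F; that is, for every f ∈ F one has μ^{(K)}(f) = q^{(K)}(τ^{(K)}(f)) (Fock–Goncharov decomposition of the mutation composite for generalized cluster algebras with principal coefficients). -/

import Mathlib

noncomputable section

/-- Variables of the ambient field of a generalized cluster algebra of rank `n` with
mutation degrees `r`: cluster variables `x_i`, coefficients `y_i`, and `z_{i,s}` for
`1 ≤ s ≤ r_i - 1` (encoded by `Fin (r i - 1)`, the variable `z i t` standing for
`z_{i, t+1}`). -/
inductive GVar (n : ℕ) (r : Fin n → ℕ) : Type where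
  | x : Fin n → GVar n r
  | y : Fin n → GVar n r
  | z : (i : Fin n) → Fin (r i - 1) → GVar n r

/-- The ambient field: rational functions over `ℚ` in the variables `GVar n r`. -/
abbrev GF (n : ℕ) (r : Fin n → ℕ) : Type := FractionRing (MvPolynomial (GVar n r) ℚ)

/-- The variable `x_i` as an element of the field `GF n r`. -/
def Xv {n : ℕ} {r : Fin n → ℕ} (i : Fin n) : GF n r :=
  algebraMap (MvPolynomial (GVar n r) ℚ) (GF n r) (MvPolynomial.X (GVar.x i))

/-- The variable `y_i` as an element of the field `GF n r`. -/
def Yv {n : ℕ} {r : Fin n → ℕ} (i : Fin n) : GF n r :=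
  algebraMap (MvPolynomial (GVar n r) ℚ) (GF n r) (MvPolynomial.X (GVar.y i))

/-- The variable `z_{i,s+1}` (for `s : Fin (r i - 1)`) as an element of `GF n r`. -/
def Zv {n : ℕ} {r : Fin n → ℕ} (i : Fin n) (s : Fin (r i - 1)) : GF n r :=
  algebraMap (MvPolynomial (GVar n r) ℚ) (GF n r) (MvPolynomial.X (GVar.z i s))

/-- A rational constant as an element of `GF n r`. -/
def Qc {n : ℕ} {r : Fin n → ℕ} (a : ℚ) : GF n r :=
  algebraMap (MvPolynomial (GVar n r) ℚ) (GF n r) (MvPolynomial.C a)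

/-- `z_{i,s}` for `0 ≤ s ≤ r i`, with the convention `z_{i,0} = z_{i,r_i} = 1`. -/
def Zc {n : ℕ} (r : Fin n → ℕ) (i : Fin n) (s : ℕ) : GF n r :=
  if h : 0 < s ∧ s < r i then Zv i ⟨s - 1, by omega⟩ else 1

/-- `x^v = ∏ x_i^{v_i}` for `v ∈ ℤ^n`. -/
def xpow {n : ℕ} (r : Fin n → ℕ) (v : Fin n → ℤ) : GF n r :=
  ∏ i, Xv (r := r) i ^ v i

/-- `ŷ_i = y_i·∏_j x_j^{b_{ji}}`. -/
def yhat {n : ℕ} (r : Fin n → ℕ) (B : Matrix (Fin n) (Fin n) ℤ) (i : Fin n) : GF n r :=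
  Yv i * ∏ j, Xv (r := r) j ^ B j i

/-- `ŷ^v = ∏ ŷ_i^{v_i}` for `v ∈ ℤ^n`. -/
def yhatpow {n : ℕ} (r : Fin n → ℕ) (B : Matrix (Fin n) (Fin n) ℤ) (v : Fin n → ℤ) :
    GF n r :=
  ∏ i, yhat r B i ^ v i

open MvPolynomial

namespace StmtTen
variable {n : ℕ} {r : Fin n → ℕ}

lemma algMap_inj :
    Function.Injective (algebraMap (MvPolynomial (GVar n r) ℚ) (GF n r)) :=
  IsFractionRing.injective _ _

lemma algMap_ne_zero {p : MvPolynomial (GVar n r) ℚ} (hp : p ≠ 0) :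
    algebraMap (MvPolynomial (GVar n r) ℚ) (GF n r) p ≠ 0 := by
  intro h
  exact hp (algMap_inj (by simpa using h))

/-- exponent Finsupp collecting `g i ↦ ν i` -/
def expF (g : Fin n → GVar n r) (ν : Fin n → ℕ) : GVar n r →₀ ℕ :=
  ∑ i, Finsupp.single (g i) (ν i)

lemma alg_monomial_expF (g : Fin n → GVar n r) (ν : Fin n → ℕ) :
    algebraMap (MvPolynomial (GVar n r) ℚ) (GF n r) (monomial (expF g ν) 1)
      = ∏ i, (algebraMap (MvPolynomial (GVar n r) ℚ) (GF n r) (X (g i))) ^ (ν i) := by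
  rw [expF, monomial_sum_one, map_prod]
  refine Finset.prod_congr rfl fun i _ => ?_
  rw [← X_pow_eq_monomial, map_pow]

/-- split a zpow-product of variables into a ratio of images of monomials -/
lemma zpow_prod_split (g : Fin n → GVar n r) (v : Fin n → ℤ) :
    ∏ i, (algebraMap (MvPolynomial (GVar n r) ℚ) (GF n r) (X (g i))) ^ (v i)
      = algebraMap (MvPolynomial (GVar n r) ℚ) (GF n r) (monomial (expF g (fun i => (v i).toNat)) 1)
        * (algebraMap (MvPolynomial (GVar n r) ℚ) (GF n r)
            (monomial (expF g (fun i => (-(v i)).toNat)) 1))⁻¹ := by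
  rw [alg_monomial_expF, alg_monomial_expF, ← Finset.prod_inv_distrib, ← Finset.prod_mul_distrib]
  refine Finset.prod_congr rfl fun i _ => ?_
  have hx : (algebraMap (MvPolynomial (GVar n r) ℚ) (GF n r)) (X (g i)) ≠ 0 :=
    algMap_ne_zero (X_ne_zero _)
  have hv : ((v i).toNat : ℤ) - ((-(v i)).toNat : ℤ) = v i := by omega
  conv_lhs => rw [← hv]
  rw [zpow_sub₀ hx, zpow_natCast, zpow_natCast, div_eq_mul_inv]

lemma expF_apply_y (j : Fin n) (ν : Fin n → ℕ) :
    expF (GVar.y (r := r)) ν (GVar.y j) = ν j := by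
  classical
  rw [expF, Finsupp.finset_sum_apply]
  rw [Finset.sum_eq_single j]
  · simp [Finsupp.single_apply]
  · intro b _ hb
    simp [Finsupp.single_apply, hb]
  · simp

lemma expF_x_apply_y (j : Fin n) (ν : Fin n → ℕ) :
    expF (GVar.x (r := r)) ν (GVar.y j) = 0 := by
  classical
  rw [expF, Finsupp.finset_sum_apply]
  refine Finset.sum_eq_zero fun i _ => ?_
  simp [Finsupp.single_apply]

/-- The polynomial version of `Zc`. -/
def zcPoly (r : Fin n → ℕ) (κ : Fin n) (s : ℕ) : MvPolynomial (GVar n r) ℚ :=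
  if h : 0 < s ∧ s < r κ then X (GVar.z κ ⟨s - 1, by omega⟩) else 1

lemma alg_zcPoly (κ : Fin n) (s : ℕ) :
    algebraMap (MvPolynomial (GVar n r) ℚ) (GF n r) (zcPoly r κ s) = Zc r κ s := by
  rw [Zc, zcPoly]
  split
  · rfl
  · exact map_one _

lemma zcPoly_monomial (κ : Fin n) (s : ℕ) :
    ∃ d : GVar n r →₀ ℕ, zcPoly r κ s = monomial d 1 ∧ ∀ l, d (GVar.y l) = 0 := by
  rw [zcPoly]
  split
  next h =>
    refine ⟨Finsupp.single (GVar.z κ ⟨s - 1, by omega⟩) 1, ?_, fun l => ?_⟩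
    · rw [← X_pow_eq_monomial, pow_one]
    · simp [Finsupp.single_apply]
  next h =>
    refine ⟨0, ?_, fun l => rfl⟩
    rw [monomial_zero', C_1]

lemma monomial_one_mul (e1 e2 : GVar n r →₀ ℕ) :
    (monomial (e1 + e2) (1:ℚ) : MvPolynomial (GVar n r) ℚ) = monomial e1 1 * monomial e2 1 := by
  rw [monomial_mul, one_mul]

/-- Key nonvanishing lemma. -/
lemma P_ne_zero (κ l : Fin n) (w u : Fin n → ℤ) (hl : w l ≠ 0) (R : ℕ) :
    (∑ s ∈ Finset.range (R+1), Zc r κ s *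
      ((∏ i, Yv (r := r) i ^ w i) * (∏ m, Xv (r := r) m ^ u m)) ^ s) ≠ 0 := by
  classical
  set alg := algebraMap (MvPolynomial (GVar n r) ℚ) (GF n r) with halg
  set da : GVar n r →₀ ℕ :=
    expF GVar.y (fun i => (w i).toNat) + expF GVar.x (fun m => (u m).toNat) with hda
  set db : GVar n r →₀ ℕ :=
    expF GVar.y (fun i => (-(w i)).toNat) + expF GVar.x (fun m => (-(u m)).toNat) with hdb
  have hA : (∏ i, Yv (r := r) i ^ w i) * (∏ m, Xv (r := r) m ^ u m)
      = alg (monomial da 1) * (alg (monomial db 1))⁻¹ := by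
    simp only [Yv, Xv, halg]
    rw [zpow_prod_split, zpow_prod_split, hda, hdb, monomial_one_mul, monomial_one_mul,
      map_mul, map_mul, mul_inv]
    ring
  have hbne : alg (monomial db 1) ≠ 0 := algMap_ne_zero (by simp [monomial_eq_zero])
  set p : MvPolynomial (GVar n r) ℚ :=
    ∑ s ∈ Finset.range (R+1), zcPoly r κ s * (monomial da 1)^s * (monomial db 1)^(R-s) with hp
  have key : (∑ s ∈ Finset.range (R+1), Zc r κ s *
      ((∏ i, Yv (r := r) i ^ w i) * (∏ m, Xv (r := r) m ^ u m)) ^ s)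
      * (alg (monomial db 1))^R = alg p := by
    rw [hp, map_sum, Finset.sum_mul]
    refine Finset.sum_congr rfl fun s hs => ?_
    have hsR : s ≤ R := Nat.lt_succ_iff.mp (Finset.mem_range.mp hs)
    rw [hA, map_mul, map_mul, map_pow, map_pow, alg_zcPoly, mul_pow, inv_pow,
      show R = s + (R - s) by omega, pow_add, Nat.add_sub_cancel_left]
    have hbs : (alg (monomial db 1))^s ≠ 0 := pow_ne_zero _ hbne
    field_simp
  have hda_y : da (GVar.y l) = (w l).toNat := by
    rw [hda, Finsupp.add_apply, expF_apply_y, expF_x_apply_y, add_zero]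
  have hdb_y : db (GVar.y l) = (-(w l)).toNat := by
    rw [hdb, Finsupp.add_apply, expF_apply_y, expF_x_apply_y, add_zero]
  have hcoeff : MvPolynomial.coeff (R • db) p = 1 := by
    rw [hp, coeff_sum]
    rw [Finset.sum_eq_single_of_mem 0 (Finset.mem_range.mpr (by omega))]
    · rw [show zcPoly r κ 0 = 1 from dif_neg (by omega), one_mul, pow_zero, one_mul,
        Nat.sub_zero, monomial_pow, one_pow, coeff_monomial, if_pos rfl]
    · intro s hs hs0
      obtain ⟨dz, hdz, hdzy⟩ := zcPoly_monomial κ s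
      have hsR : s ≤ R := Nat.lt_succ_iff.mp (Finset.mem_range.mp hs)
      have hne : dz + s • da + (R - s) • db ≠ R • db := by
        intro hEq
        have := congrArg (fun d : GVar n r →₀ ℕ => d (GVar.y l)) hEq
        simp only [Finsupp.add_apply, Finsupp.smul_apply, smul_eq_mul, hda_y, hdb_y,
          hdzy] at this
        rcases lt_or_gt_of_ne hl with hneg | hpos
        · have ha : (w l).toNat = 0 := by omega
          have hb : 0 < (-(w l)).toNat := by omega
          rw [ha] at this
          have hlt : (R - s) * (-(w l)).toNat < R * (-(w l)).toNat :=
            mul_lt_mul_of_pos_right (by omega) hb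
          omega
        · have hb : (-(w l)).toNat = 0 := by omega
          have ha : 0 < (w l).toNat := by omega
          rw [hb] at this
          have hpos2 : 0 < s * (w l).toNat := Nat.mul_pos (by omega) ha
          omega
      rw [hdz, monomial_pow, monomial_pow, monomial_mul, monomial_mul, coeff_monomial,
        if_neg hne]
  have hpne : p ≠ 0 := fun h => by rw [h] at hcoeff; simp at hcoeff
  intro hS
  rw [hS, zero_mul] at key
  apply hpne
  apply algMap_inj
  rw [map_zero, ← halg]
  exact key.symm

lemma Xv_ne_zero (i : Fin n) : (Xv (r := r) i) ≠ 0 :=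
  algMap_ne_zero (X_ne_zero _)

lemma Yv_ne_zero (i : Fin n) : (Yv (r := r) i) ≠ 0 :=
  algMap_ne_zero (X_ne_zero _)

/-- products of zpow of a fixed nonzero base -/
lemma prod_zpow' {α : Type*} (s : Finset α) {a : GF n r} (ha : a ≠ 0) (f : α → ℤ) :
    ∏ i ∈ s, a ^ f i = a ^ (∑ i ∈ s, f i) := by
  classical
  induction s using Finset.induction with
  | empty => simp
  | insert _ _ hx ih =>
    rw [Finset.prod_insert hx, Finset.sum_insert hx, zpow_add₀ ha, ih]

lemma prod_prod_zpow (f : Fin n → GF n r) (hf : ∀ m, f m ≠ 0)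
    (A : Fin n → Fin n → ℤ) (w : Fin n → ℤ) :
    ∏ i, (∏ m, f m ^ A m i) ^ w i = ∏ m, f m ^ (∑ i, A m i * w i) := by
  have h1 : ∀ i, (∏ m, f m ^ A m i) ^ w i = ∏ m, f m ^ (A m i * w i) := by
    intro i
    rw [← Finset.prod_zpow]
    exact Finset.prod_congr rfl fun m _ => (zpow_mul (f m) (A m i) (w i)).symm
  rw [Finset.prod_congr rfl fun i _ => h1 i, Finset.prod_comm]
  exact Finset.prod_congr rfl fun m _ => prod_zpow' _ (hf m) _

/-- `yhatpow` separated into y-part and x-part. -/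
lemma yhatpow_split (B : Matrix (Fin n) (Fin n) ℤ) (w : Fin n → ℤ) :
    yhatpow r B w
      = (∏ i, Yv (r := r) i ^ w i) * (∏ m, Xv (r := r) m ^ (∑ i, B m i * w i)) := by
  rw [yhatpow, ← prod_prod_zpow (Xv (r := r)) Xv_ne_zero B w, ← Finset.prod_mul_distrib]
  refine Finset.prod_congr rfl fun i _ => ?_
  rw [yhat, mul_zpow]

/-- extensionality for ring homs on `GF` agreeing on all variables -/
lemma GF_hom_ext (φ ψ : GF n r →+* GF n r)
    (hx : ∀ i, φ (Xv i) = ψ (Xv i)) (hy : ∀ i, φ (Yv i) = ψ (Yv i))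
    (hz : ∀ i s, φ (Zv i s) = ψ (Zv i s)) : φ = ψ := by
  apply IsLocalization.ringHom_ext (nonZeroDivisors (MvPolynomial (GVar n r) ℚ))
  apply MvPolynomial.ringHom_ext
  · intro a
    have h : (φ.comp (algebraMap (MvPolynomial (GVar n r) ℚ) (GF n r))).comp
        (MvPolynomial.C : ℚ →+* MvPolynomial (GVar n r) ℚ)
        = (ψ.comp (algebraMap (MvPolynomial (GVar n r) ℚ) (GF n r))).comp
        (MvPolynomial.C : ℚ →+* MvPolynomial (GVar n r) ℚ) := Subsingleton.elim _ _
    exact congrArg (fun f => f a) h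
  · intro v
    cases v with
    | x i => exact hx i
    | y i => exact hy i
    | z i s => exact hz i s

lemma map_Zc (φ : GF n r →+* GF n r) (h : ∀ i s, φ (Zv i s) = Zv i s) (i : Fin n) (s : ℕ) :
    φ (Zc r i s) = Zc r i s := by
  rw [Zc]
  split
  · exact h _ _
  · exact map_one φ

end StmtTen

open StmtTen
set_option maxHeartbeats 1000000

/-- **Fock–Goncharov decomposition.** For a generalized cluster pattern
with principal coefficients, the composite mutation homomorphism decomposes as
`μ^{(K)} = q^{(K)} ∘ τ^{(K)}`. -/
theorem stmt_10 (n K : ℕ) (hn : 1 ≤ n) (r : Fin n → ℕ) (hr : ∀ i, 0 < r i)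
    (B₀ : Matrix (Fin n) (Fin n) ℤ)
    (D₀ : Fin n → ℤ) (hD₀ : ∀ i, 0 < D₀ i)
    (hskew : ∀ i j, D₀ i * (r i : ℤ) * B₀ i j = -(D₀ j * (r j : ℤ) * B₀ j i))
    (idx : ℕ → Fin n) (ε : ℕ → ℤ)
    (hε : ∀ j < K, ε (j + 1) = 1 ∨ ε (j + 1) = -1)
    (B C G : ℕ → Matrix (Fin n) (Fin n) ℤ)
    (hB0 : B 0 = B₀) (hC0 : C 0 = 1) (hG0 : G 0 = 1)
    -- at each step the c-vector is nonzero and sign-coherent with common sign ε_j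
    (hcv : ∀ j < K, (∃ l, C j l (idx (j + 1)) ≠ 0) ∧
      ∀ l, 0 ≤ ε (j + 1) * C j l (idx (j + 1)))
    (hB : ∀ j < K, ∀ (a b : Fin n),
      B (j + 1) a b =
        if a = idx (j + 1) ∨ b = idx (j + 1) then -(B j a b)
        else B j a b + (r (idx (j + 1)) : ℤ) *
          (max (-(B j a (idx (j + 1)))) 0 * B j (idx (j + 1)) b
            + B j a (idx (j + 1)) * max (B j (idx (j + 1)) b) 0))
    (hC : ∀ j < K, ∀ (a b : Fin n),
      C (j + 1) a b =
        if b = idx (j + 1) then -(C j a b)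
        else C j a b + (r (idx (j + 1)) : ℤ) *
          (C j a (idx (j + 1)) * max (ε (j + 1) * B j (idx (j + 1)) b) 0
            + max (-(ε (j + 1) * C j a (idx (j + 1)))) 0 * B j (idx (j + 1)) b))
    (hG : ∀ j < K, ∀ (l i : Fin n),
      G (j + 1) l i =
        if i = idx (j + 1) then
          -(G j l i) + (r (idx (j + 1)) : ℤ) *
            ∑ p, max (-(ε (j + 1) * B j p (idx (j + 1)))) 0 * G j l p
        else G j l i)
    -- tropical duality
    (hdual : ∀ j ≤ K, ∀ (i l : Fin n),
      ∑ m, G j m i * (D₀ m * (r m : ℤ)) * C j m l =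
        if i = l then D₀ l * (r l : ℤ) else 0)
    -- the rational numbers h_{i,j} = (e_i, d_{(j)}·c_j)_{D₀R} are integers
    (hfun : ℕ → Fin n → ℤ)
    (hfunint : ∀ j < K, ∀ i,
      hfun (j + 1) i * (D₀ (idx (j + 1)) * (r (idx (j + 1)) : ℤ)) =
        D₀ i * (r i : ℤ) * C j i (idx (j + 1)))
    (μ : ℕ → (GF n r →+* GF n r))
    (hμ0 : ∀ j < K, ∀ a : ℚ, μ (j + 1) (Qc a) = Qc a)
    (hμy : ∀ j < K, ∀ i, μ (j + 1) (Yv i) = Yv i)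
    (hμz : ∀ j < K, ∀ i s, μ (j + 1) (Zv i s) = Zv i s)
    (hμx : ∀ j < K, ∀ i, i ≠ idx (j + 1) → μ (j + 1) (Xv i) = Xv i)
    (hμxk : ∀ j < K, μ (j + 1) (Xv (idx (j + 1))) =
      (Xv (idx (j + 1)) : GF n r)⁻¹ *
        (∏ l, Xv (r := r) l ^ max (-(ε (j + 1) * B j l (idx (j + 1)))) 0) ^ (r (idx (j + 1))) *
        ∑ s ∈ Finset.range (r (idx (j + 1)) + 1),
          Zc r (idx (j + 1)) s *
            ((∏ l, Yv (r := r) l ^ C j l (idx (j + 1))) *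
              ∏ l, Xv (r := r) l ^ B j l (idx (j + 1))) ^ (ε (j + 1) * s))
    (M : ℕ → (GF n r →+* GF n r))
    (hM0 : M 0 = RingHom.id _)
    (hM : ∀ j < K, M (j + 1) = (M j).comp (μ (j + 1)))
    (τ : ℕ → (GF n r →+* GF n r))
    (hτ0 : ∀ j < K, ∀ a : ℚ, τ (j + 1) (Qc a) = Qc a)
    (hτy : ∀ j < K, ∀ i, τ (j + 1) (Yv i) = Yv i)
    (hτz : ∀ j < K, ∀ i s, τ (j + 1) (Zv i s) = Zv i s)
    (hτx : ∀ j < K, ∀ i, i ≠ idx (j + 1) → τ (j + 1) (Xv i) = Xv i)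
    (hτxk : ∀ j < K, τ (j + 1) (Xv (idx (j + 1))) =
      (Xv (idx (j + 1)) : GF n r)⁻¹ *
        ∏ l, Xv l ^ max (-(ε (j + 1) * B j l (idx (j + 1)) * (r (idx (j + 1)) : ℤ))) 0)
    (T : ℕ → (GF n r →+* GF n r))
    (hT0 : T 0 = RingHom.id _)
    (hT : ∀ j < K, T (j + 1) = (T j).comp (τ (j + 1)))
    (q : ℕ → (GF n r →+* GF n r))
    (hq0 : ∀ j < K, ∀ a : ℚ, q (j + 1) (Qc a) = Qc a)
    (hqy : ∀ j < K, ∀ i, q (j + 1) (Yv i) = Yv i)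
    (hqz : ∀ j < K, ∀ i s, q (j + 1) (Zv i s) = Zv i s)
    (hqx : ∀ j < K, ∀ i, q (j + 1) (Xv i) =
      Xv i * (∑ s ∈ Finset.range (r (idx (j + 1)) + 1),
        Zc r (idx (j + 1)) s *
          yhatpow r B₀ (fun m => ε (j + 1) * C j m (idx (j + 1))) ^ s) ^ (-(hfun (j + 1) i)))
    (Q : ℕ → (GF n r →+* GF n r))
    (hQ0 : Q 0 = RingHom.id _)
    (hQ : ∀ j < K, Q (j + 1) = (Q j).comp (q (j + 1)))
    : ∀ f, M K f = Q K (T K f) := by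
  classical
  have hε1 : ∀ j, j < K → ε (j + 1) ≠ 0 := fun j hj => by
    rcases hε j hj with h | h <;> omega
  have hΔpos : ∀ i : Fin n, (0:ℤ) < D₀ i * (r i : ℤ) := fun i =>
    mul_pos (hD₀ i) (by exact_mod_cast hr i)
  have hΔne : ∀ i : Fin n, (D₀ i * (r i : ℤ)) ≠ 0 := fun i => (hΔpos i).ne'
  have hmax : ∀ (c x : ℤ), 0 ≤ c → c * max x 0 = max (c * x) 0 := by
    intro c x hc
    rcases le_total x 0 with h | h
    · rw [max_eq_right h, mul_zero, max_eq_right (mul_nonpos_of_nonneg_of_nonpos hc h)]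
    · rw [max_eq_left h, max_eq_left (mul_nonneg hc h)]
  have hmx : ∀ x : ℤ, max (-x) 0 - max x 0 = -x := by
    intro x
    rcases le_total x 0 with h | h
    · rw [max_eq_left (neg_nonneg.mpr h), max_eq_right h]; ring
    · rw [max_eq_right (neg_nonpos.mpr h), max_eq_left h]; ring
  -- skew symmetry of D₀·R·B_j for all j
  have skew : ∀ j, j ≤ K → ∀ a b : Fin n,
      D₀ a * (r a : ℤ) * B j a b = -(D₀ b * (r b : ℤ) * B j b a) := by
    intro j
    induction j with
    | zero => intro _ a b; rw [hB0]; exact hskew a b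
    | succ j ihs =>
      intro hj a b
      have hjK : j < K := hj
      have IH := ihs (le_of_lt hjK)
      rw [hB j hjK a b, hB j hjK b a]
      by_cases hab : a = idx (j+1) ∨ b = idx (j+1)
      · rw [if_pos hab, if_pos hab.symm]
        linear_combination (-1 : ℤ) * IH a b
      · rw [if_neg hab, if_neg fun h => hab h.symm]
        push_neg at hab
        have e1 := IH a b
        have e2 := IH a (idx (j+1))
        have e3 := IH b (idx (j+1))
        have m1 : D₀ a * (r a : ℤ) * max (-(B j a (idx (j+1)))) 0
            = D₀ (idx (j+1)) * (r (idx (j+1)) : ℤ) * max (B j (idx (j+1)) a) 0 := by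
          rw [hmax _ _ (hΔpos a).le, hmax _ _ (hΔpos (idx (j+1))).le]
          congr 1
          linarith
        have m2 : D₀ b * (r b : ℤ) * max (-(B j b (idx (j+1)))) 0
            = D₀ (idx (j+1)) * (r (idx (j+1)) : ℤ) * max (B j (idx (j+1)) b) 0 := by
          rw [hmax _ _ (hΔpos b).le, hmax _ _ (hΔpos (idx (j+1))).le]
          congr 1
          linarith
        apply mul_left_cancel₀ (hΔne (idx (j+1)))
        linear_combination (D₀ (idx (j+1)) * ((r (idx (j+1)):ℤ))) * e1
          + ((r (idx (j+1)):ℤ) * (D₀ (idx (j+1)) * ((r (idx (j+1)):ℤ))) * B j (idx (j+1)) b) * m1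
          + ((r (idx (j+1)):ℤ) * (D₀ (idx (j+1)) * ((r (idx (j+1)):ℤ))) * max (B j (idx (j+1)) b) 0) * e2
          + ((r (idx (j+1)):ℤ) * (D₀ (idx (j+1)) * ((r (idx (j+1)):ℤ))) * B j (idx (j+1)) a) * m2
          + ((r (idx (j+1)):ℤ) * (D₀ (idx (j+1)) * ((r (idx (j+1)):ℤ))) * max (B j (idx (j+1)) a) 0) * e3
  have Bkk0 : ∀ j, j ≤ K → ∀ c : Fin n, B j c c = 0 := by
    intro j hj c
    have h := skew j hj c c
    have h2 : D₀ c * (r c:ℤ) * B j c c = 0 := by linarith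
    exact (mul_eq_zero.mp h2).resolve_left (hΔne c)
  -- second duality: G_j B_j = B₀ C_j
  have GBlem : ∀ j, j ≤ K → ∀ a b : Fin n,
      ∑ i, G j a i * B j i b = ∑ m, B₀ a m * C j m b := by
    intro j
    induction j with
    | zero =>
      intro _ a b
      rw [hG0, hC0, hB0,
        Finset.sum_eq_single_of_mem a (Finset.mem_univ a)
          (fun i _ hne => by rw [Matrix.one_apply_ne' hne, zero_mul]),
        Finset.sum_eq_single_of_mem b (Finset.mem_univ b)
          (fun m _ hne => by rw [Matrix.one_apply_ne hne, mul_zero]),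
        Matrix.one_apply_eq, one_mul, Matrix.one_apply_eq, mul_one]
    | succ j ihg =>
      intro hj a b
      have hjK : j < K := hj
      have IH := fun b' => ihg (le_of_lt hjK) a b'
      have hBkk : B j (idx (j+1)) (idx (j+1)) = 0 := Bkk0 j (le_of_lt hjK) _
      have hsc := (hcv j hjK).2
      by_cases hbk : b = idx (j+1)
      · subst hbk
        have hL : ∀ i, G (j+1) a i * B (j+1) i (idx (j+1))
            = -(G j a i * B j i (idx (j+1))) := by
          intro i
          by_cases hik : i = idx (j+1)
          · subst hik
            rw [hB j hjK (idx (j+1)) (idx (j+1)), if_pos (Or.inl rfl), hBkk]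
            ring
          · rw [hG j hjK a i, if_neg hik, hB j hjK i (idx (j+1)), if_pos (Or.inr rfl)]
            ring
        have hLs : ∑ i, G (j+1) a i * B (j+1) i (idx (j+1))
            = -(∑ i, G j a i * B j i (idx (j+1))) := by
          rw [← Finset.sum_neg_distrib]
          exact Finset.sum_congr rfl fun i _ => hL i
        have hRs : ∑ m, B₀ a m * C (j+1) m (idx (j+1))
            = -(∑ m, B₀ a m * C j m (idx (j+1))) := by
          rw [← Finset.sum_neg_distrib]
          refine Finset.sum_congr rfl fun m _ => ?_
          rw [hC j hjK m (idx (j+1)), if_pos rfl]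
          ring
        rw [hLs, hRs, IH (idx (j+1))]
      · have hmain : ∑ i, G (j+1) a i * B (j+1) i b
            = (∑ i ∈ Finset.univ.erase (idx (j+1)),
                (G j a i * B j i b
                  + ((r (idx (j+1)):ℤ) * B j (idx (j+1)) b)
                      * (G j a i * max (-(B j i (idx (j+1)))) 0)
                  + ((r (idx (j+1)):ℤ) * max (B j (idx (j+1)) b) 0)
                      * (G j a i * B j i (idx (j+1)))))
              + (-(G j a (idx (j+1))) + (r (idx (j+1)):ℤ) *
                  ∑ p, max (-(ε (j+1) * B j p (idx (j+1)))) 0 * G j a p)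
                * (-(B j (idx (j+1)) b)) := by
          rw [← Finset.sum_erase_add Finset.univ _ (Finset.mem_univ (idx (j+1)))]
          congr 1
          · refine Finset.sum_congr rfl fun i hi => ?_
            have hik : i ≠ idx (j+1) := (Finset.mem_erase.mp hi).1
            rw [hG j hjK a i, if_neg hik, hB j hjK i b, if_neg (by tauto)]
            ring
          · rw [hG j hjK a (idx (j+1)), if_pos rfl, hB j hjK (idx (j+1)) b,
              if_pos (Or.inl rfl)]
        have er1 : ∑ i ∈ Finset.univ.erase (idx (j+1)), G j a i * B j i b
            = (∑ i, G j a i * B j i b) - G j a (idx (j+1)) * B j (idx (j+1)) b := by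
          have h := Finset.sum_erase_add Finset.univ (fun i => G j a i * B j i b)
            (Finset.mem_univ (idx (j+1)))
          linarith
        have er2 : ∑ i ∈ Finset.univ.erase (idx (j+1)), G j a i * max (-(B j i (idx (j+1)))) 0
            = ∑ i, G j a i * max (-(B j i (idx (j+1)))) 0 := by
          have h := Finset.sum_erase_add Finset.univ
            (fun i => G j a i * max (-(B j i (idx (j+1)))) 0) (Finset.mem_univ (idx (j+1)))
          simp only [hBkk, neg_zero, max_self, mul_zero, add_zero] at h
          exact h
        have er3 : ∑ i ∈ Finset.univ.erase (idx (j+1)), G j a i * B j i (idx (j+1))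
            = ∑ i, G j a i * B j i (idx (j+1)) := by
          have h := Finset.sum_erase_add Finset.univ
            (fun i => G j a i * B j i (idx (j+1))) (Finset.mem_univ (idx (j+1)))
          simp only [hBkk, mul_zero, add_zero] at h
          exact h
        rw [hmain, Finset.sum_add_distrib, Finset.sum_add_distrib,
          ← Finset.mul_sum, ← Finset.mul_sum, er1, er2, er3]
        have hRs : ∑ m, B₀ a m * C (j+1) m b
            = (∑ m, B₀ a m * C j m b)
              + ((r (idx (j+1)):ℤ) * max (ε (j+1) * B j (idx (j+1)) b) 0)
                * (∑ m, B₀ a m * C j m (idx (j+1))) := by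
          rw [Finset.mul_sum, ← Finset.sum_add_distrib]
          refine Finset.sum_congr rfl fun m _ => ?_
          rw [hC j hjK m b, if_neg hbk,
            show max (-(ε (j+1) * C j m (idx (j+1)))) 0 = 0 from
              max_eq_right (by linarith [hsc m])]
          ring
        rw [hRs, ← IH b, ← IH (idx (j+1))]
        rcases hε j hjK with hε' | hε'
        · have hS12 : ∑ p, max (-(ε (j+1) * B j p (idx (j+1)))) 0 * G j a p
              = ∑ i, G j a i * max (-(B j i (idx (j+1)))) 0 := by
            refine Finset.sum_congr rfl fun p _ => ?_
            rw [hε', one_mul, mul_comm]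
          rw [hS12, hε']
          simp only [one_mul]
          ring
        · have hS12 : ∑ p, max (-(ε (j+1) * B j p (idx (j+1)))) 0 * G j a p
              = (∑ i, G j a i * max (-(B j i (idx (j+1)))) 0)
                + ∑ i, G j a i * B j i (idx (j+1)) := by
            rw [← Finset.sum_add_distrib]
            refine Finset.sum_congr rfl fun p _ => ?_
            rw [hε', show -((-1:ℤ) * B j p (idx (j+1))) = B j p (idx (j+1)) by ring]
            linear_combination (-(G j a p)) * hmx (B j p (idx (j+1)))
          rw [hS12, hε',
            show (-1:ℤ) * B j (idx (j+1)) b = -(B j (idx (j+1)) b) by ring]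
          linear_combination (-((r (idx (j+1)):ℤ)
            * (∑ i, G j a i * B j i (idx (j+1))))) * hmx (B j (idx (j+1)) b)
  -- values of the composite tropical maps
  have Ty : ∀ j, j ≤ K → ∀ i, T j (Yv i) = Yv i := by
    intro j
    induction j with
    | zero => intro _ i; rw [hT0]; rfl
    | succ j ih =>
      intro hj i
      rw [hT j hj, RingHom.comp_apply, hτy j hj, ih (by omega)]
  have Tz : ∀ j, j ≤ K → ∀ i s, T j (Zv i s) = Zv i s := by
    intro j
    induction j with
    | zero => intro _ i s; rw [hT0]; rfl
    | succ j ih =>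
      intro hj i s
      rw [hT j hj, RingHom.comp_apply, hτz j hj, ih (by omega)]
  have TZc : ∀ j, j ≤ K → ∀ κ s, T j (Zc r κ s) = Zc r κ s :=
    fun j hj κ s => map_Zc (T j) (Tz j hj) κ s
  have hexpmax : ∀ j, j < K → ∀ l,
      max (-(ε (j+1) * B j l (idx (j+1)) * (r (idx (j+1)):ℤ))) 0
        = (r (idx (j+1)):ℤ) * max (-(ε (j+1) * B j l (idx (j+1)))) 0 := by
    intro j hj l
    rw [hmax _ _ (by positivity),
      show -(ε (j+1) * B j l (idx (j+1)) * (r (idx (j+1)):ℤ))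
        = (r (idx (j+1)):ℤ) * -(ε (j+1) * B j l (idx (j+1))) from by ring]
  have claimA : ∀ j, j < K →
      (∏ m, Xv (r := r) m ^ G j m (idx (j+1)))⁻¹ *
        ∏ l, (∏ m, Xv (r := r) m ^ G j m l)
          ^ ((r (idx (j+1)) : ℤ) * max (-(ε (j+1) * B j l (idx (j+1)))) 0)
      = ∏ m, Xv (r := r) m ^ G (j+1) m (idx (j+1)) := by
    intro j hj
    rw [prod_prod_zpow _ Xv_ne_zero (fun m l => G j m l) _]
    rw [show (∏ m, Xv (r:=r) m ^ G j m (idx (j+1)))⁻¹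
        = ∏ m, Xv (r:=r) m ^ (-(G j m (idx (j+1)))) from by
      rw [← Finset.prod_inv_distrib]
      exact Finset.prod_congr rfl fun m _ => (zpow_neg _ _).symm]
    rw [← Finset.prod_mul_distrib]
    refine Finset.prod_congr rfl fun m _ => ?_
    rw [← zpow_add₀ (Xv_ne_zero m), hG j hj m (idx (j+1)), if_pos rfl, Finset.mul_sum]
    congr 2
    exact Finset.sum_congr rfl fun p _ => by ring
  have Tx : ∀ j, j ≤ K → ∀ i, T j (Xv i) = ∏ m, Xv (r := r) m ^ G j m i := by
    intro j
    induction j with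
    | zero =>
      intro _ i
      rw [hT0, hG0,
        Finset.prod_eq_single_of_mem i (Finset.mem_univ i)
          (fun m _ hne => by rw [Matrix.one_apply_ne hne, zpow_zero]),
        Matrix.one_apply_eq, zpow_one]
      rfl
    | succ j ih =>
      intro hj i
      have hjK : j < K := hj
      have IH := ih (le_of_lt hjK)
      rw [hT j hjK, RingHom.comp_apply]
      by_cases hik : i = idx (j+1)
      · subst hik
        rw [hτxk j hjK, map_mul, map_inv₀, IH, map_prod]
        rw [show (∏ l, T j (Xv l ^ max (-(ε (j+1) * B j l (idx (j+1)) * (r (idx (j+1)):ℤ))) 0))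
            = ∏ l, (∏ m, Xv (r:=r) m ^ G j m l)
                ^ ((r (idx (j+1)):ℤ) * max (-(ε (j+1) * B j l (idx (j+1)))) 0) from
          Finset.prod_congr rfl fun l _ => by rw [map_zpow₀, IH l, hexpmax j hjK l]]
        exact claimA j hjK
      · rw [hτx j hjK i hik, IH i]
        exact (Finset.prod_congr rfl fun m _ => by rw [hG j hjK m i, if_neg hik]).symm
  -- the exchange polynomials are nonzero
  have Pne : ∀ j, j < K →
      (∑ s ∈ Finset.range (r (idx (j+1)) + 1), Zc r (idx (j+1)) s *
        yhatpow r B₀ (fun m => ε (j+1) * C j m (idx (j+1))) ^ s) ≠ 0 := by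
    intro j hj
    obtain ⟨l, hlne⟩ := (hcv j hj).1
    have hw : ε (j+1) * C j l (idx (j+1)) ≠ 0 := mul_ne_zero (hε1 j hj) hlne
    rw [show yhatpow r B₀ (fun m => ε (j+1) * C j m (idx (j+1)))
        = (∏ i, Yv (r := r) i ^ (ε (j+1) * C j i (idx (j+1))))
          * (∏ m, Xv (r := r) m ^ (∑ i, B₀ m i * (ε (j+1) * C j i (idx (j+1)))))
      from yhatpow_split B₀ _]
    exact P_ne_zero (idx (j+1)) l (fun i => ε (j+1) * C j i (idx (j+1)))
      (fun m => ∑ i, B₀ m i * (ε (j+1) * C j i (idx (j+1)))) hw (r (idx (j+1)))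
  -- q on a monomial in the x's
  have qXv : ∀ j, j < K → ∀ v : Fin n → ℤ,
      q (j+1) (∏ m, Xv (r := r) m ^ v m)
        = (∏ m, Xv (r := r) m ^ v m) *
          (∑ s ∈ Finset.range (r (idx (j+1)) + 1), Zc r (idx (j+1)) s *
            yhatpow r B₀ (fun m => ε (j+1) * C j m (idx (j+1))) ^ s)
          ^ (-(∑ m, v m * hfun (j+1) m)) := by
    intro j hj v
    rw [map_prod]
    rw [show (∏ m, q (j+1) (Xv (r := r) m ^ v m))
        = ∏ m, (Xv (r := r) m ^ v m *
            (∑ s ∈ Finset.range (r (idx (j+1)) + 1), Zc r (idx (j+1)) s *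
              yhatpow r B₀ (fun m => ε (j+1) * C j m (idx (j+1))) ^ s)
            ^ (-(hfun (j+1) m) * v m)) from
      Finset.prod_congr rfl fun m _ => by
        rw [map_zpow₀, hqx j hj m, mul_zpow, ← zpow_mul]]
    rw [Finset.prod_mul_distrib, prod_zpow' _ (Pne j hj) _,
      show (∑ m, -hfun (j+1) m * v m) = -(∑ m, v m * hfun (j+1) m) from by
        rw [← Finset.sum_neg_distrib]
        exact Finset.sum_congr rfl fun m _ => by ring]
  -- pairing computations
  have hsum0 : ∀ j, j < K → ∀ i, i ≠ idx (j+1) →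
      ∑ m, G j m i * hfun (j+1) m = 0 := by
    intro j hj i hik
    have h1 : (∑ m, G j m i * hfun (j+1) m) * (D₀ (idx (j+1)) * (r (idx (j+1)):ℤ)) = 0 := by
      rw [Finset.sum_mul]
      rw [show (∑ m, G j m i * hfun (j+1) m * (D₀ (idx (j+1)) * (r (idx (j+1)):ℤ)))
          = ∑ m, G j m i * (D₀ m * (r m : ℤ)) * C j m (idx (j+1)) from
        Finset.sum_congr rfl fun m _ => by
          rw [mul_assoc, hfunint j hj m, ← mul_assoc]]
      rw [hdual j (le_of_lt hj) i (idx (j+1)), if_neg hik]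
    exact (mul_eq_zero.mp h1).resolve_right (hΔne (idx (j+1)))
  have hsumk : ∀ j, j < K →
      ∑ m, G (j+1) m (idx (j+1)) * hfun (j+1) m = -1 := by
    intro j hj
    apply mul_right_cancel₀ (hΔne (idx (j+1)))
    rw [Finset.sum_mul]
    rw [show (∑ m, G (j+1) m (idx (j+1)) * hfun (j+1) m * (D₀ (idx (j+1)) * (r (idx (j+1)):ℤ)))
        = ∑ m, -(G (j+1) m (idx (j+1)) * (D₀ m * (r m : ℤ)) * C (j+1) m (idx (j+1))) from
      Finset.sum_congr rfl fun m _ => by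
        rw [mul_assoc, hfunint j hj m,
          show C j m (idx (j+1)) = -(C (j+1) m (idx (j+1))) from by
            rw [hC j hj m (idx (j+1)), if_pos rfl, neg_neg]]
        ring]
    rw [Finset.sum_neg_distrib, hdual (j+1) (by omega) (idx (j+1)) (idx (j+1)), if_pos rfl]
    ring
  -- main induction
  suffices hMQ : ∀ j, j ≤ K → ∀ f, M j f = Q j (T j f) by exact hMQ K le_rfl
  intro j
  induction j with
  | zero => intro _ f; rw [hM0, hT0, hQ0]; rfl
  | succ j ih =>
    intro hj f
    have hjK : j < K := hj
    have hjle : j ≤ K := le_of_lt hjK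
    have IH := ih hjle
    have TX : ∀ e : Fin n → ℤ, T j (∏ l, Xv (r := r) l ^ e l)
        = ∏ l, (∏ m, Xv (r := r) m ^ G j m l) ^ e l := by
      intro e
      rw [map_prod]
      exact Finset.prod_congr rfl fun l _ => by rw [map_zpow₀, Tx j hjle l]
    have claimB : (∏ l, Yv (r := r) l ^ C j l (idx (j+1))) *
        (∏ l, (∏ m, Xv (r := r) m ^ G j m l) ^ B j l (idx (j+1)))
      = yhatpow r B₀ (fun m => C j m (idx (j+1))) := by
      rw [prod_prod_zpow _ Xv_ne_zero (fun m l => G j m l) (fun l => B j l (idx (j+1))),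
        yhatpow_split]
      congr 1
      refine Finset.prod_congr rfl fun m _ => ?_
      congr 1
      exact GBlem j hjle m (idx (j+1))
    have hpowid : ∀ s : ℕ, (yhatpow r B₀ (fun m => C j m (idx (j+1)))) ^ (ε (j+1) * (s:ℤ))
        = yhatpow r B₀ (fun m => ε (j+1) * C j m (idx (j+1))) ^ s := by
      intro s
      conv_rhs => rw [← zpow_natCast (yhatpow r B₀ fun m => ε (j+1) * C j m (idx (j+1))) s]
      rw [yhatpow, yhatpow, ← Finset.prod_zpow, ← Finset.prod_zpow]
      refine Finset.prod_congr rfl fun i _ => ?_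
      rw [← zpow_mul, ← zpow_mul]
      congr 1
      ring
    have key : (T j).comp (μ (j+1)) = (q (j+1)).comp ((T j).comp (τ (j+1))) := by
      apply GF_hom_ext
      · intro i
        simp only [RingHom.comp_apply]
        by_cases hik : i = idx (j+1)
        · subst hik
          -- right-hand side
          rw [hτxk j hjK, map_mul, map_inv₀, Tx j hjle, TX,
            show (∏ l, (∏ m, Xv (r := r) m ^ G j m l)
                ^ max (-(ε (j+1) * B j l (idx (j+1)) * (r (idx (j+1)):ℤ))) 0)
              = ∏ l, (∏ m, Xv (r := r) m ^ G j m l)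
                ^ ((r (idx (j+1)):ℤ) * max (-(ε (j+1) * B j l (idx (j+1)))) 0) from
            Finset.prod_congr rfl fun l _ => by rw [hexpmax j hjK l],
            claimA j hjK, qXv j hjK (fun m => G (j+1) m (idx (j+1))), hsumk j hjK]
          -- left-hand side
          rw [hμxk j hjK, map_mul, map_mul, map_inv₀, Tx j hjle, map_pow, TX, map_sum]
          rw [show (∏ l, (∏ m, Xv (r := r) m ^ G j m l)
                ^ max (-(ε (j+1) * B j l (idx (j+1)))) 0) ^ (r (idx (j+1)))
              = ∏ l, (∏ m, Xv (r := r) m ^ G j m l)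
                ^ ((r (idx (j+1)):ℤ) * max (-(ε (j+1) * B j l (idx (j+1)))) 0) from by
            rw [← Finset.prod_pow]
            refine Finset.prod_congr rfl fun l _ => ?_
            rw [← zpow_natCast ((∏ m, Xv (r := r) m ^ G j m l)
              ^ max (-(ε (j+1) * B j l (idx (j+1)))) 0) (r (idx (j+1))), ← zpow_mul]
            congr 1
            ring]
          rw [claimA j hjK]
          congr 1
          rw [show (-(-1:ℤ)) = 1 from by norm_num, zpow_one]
          refine Finset.sum_congr rfl fun s hs => ?_
          rw [map_mul, TZc j hjle _ s, map_zpow₀, map_mul, TX (fun l => B j l (idx (j+1)))]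
          rw [show (T j (∏ l, Yv (r := r) l ^ C j l (idx (j+1))))
              = ∏ l, Yv (r := r) l ^ C j l (idx (j+1)) from by
            rw [map_prod]
            exact Finset.prod_congr rfl fun l _ => by rw [map_zpow₀, Ty j hjle l]]
          rw [claimB, hpowid s]
        · rw [hμx j hjK i hik, hτx j hjK i hik, Tx j hjle i,
            qXv j hjK (fun m => G j m i), hsum0 j hjK i hik, neg_zero, zpow_zero, mul_one]
      · intro i
        simp only [RingHom.comp_apply]
        rw [hμy j hjK i, hτy j hjK i, Ty j hjle i, hqy j hjK i]
      · intro i s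
        simp only [RingHom.comp_apply]
        rw [hμz j hjK i s, hτz j hjK i s, Tz j hjle i s, hqz j hjK i s]
    rw [hM j hjK, hT j hjK, hQ j hjK]
    simp only [RingHom.comp_apply]
    rw [IH (μ (j+1) f)]
    refine congrArg (Q j) ?_
    have h := congrArg (fun φ : GF n r →+* GF n r => φ f) key
    simpa only [RingHom.comp_apply] using h
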